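/- arXiv:1905.02987 — 2 statements merged into one kernel-verified Lean document; each statement's English description precedes it below -/
import Mathlib

section
/- Suppose u_Y(X;t), indexed by X, Y ∈ ℤ^N and t ≥ 0, are real-valued functions differentiable in t that satisfy, for all X, Y ∈ ℤ^N: the free equation d/dt u_Y(X;t) = Σ_{i=1}^N [p·u_Y(X_i^−;t) + q·u_Y(X_i^+;t) − u_Y(X;t)]; the boundary condition u_Y(X;t) = p·u_Y(X_1^−;t) + q·u_Y(X_N^+;t) whenever x_N + 1 = x_1 + L; and the boundary conditions u_Y(X;t) = p·u_Y(X_i^−;t) + q·u_Y(X_{i−1}^+;t) whenever x_i = x_{i−1} + 1, for i = 2,…,N. Then, for all X = (x_1,…,x_N) ∈ 𝒳_N(L) and Y ∈ 𝒳_N(L), u_Y satisfies the ASEP master equation: d/dt u_Y(X;t) = Σ_{i=2}^N (p·u_Y(X_i^−;t) − q·u_Y(X;t))·1[x_{i−1} ≠ x_i − 1] + (p·u_Y(X_1^−;t) − q·u_Y(X;t))·1[x_N ≠ x_1 + L − 1] + Σ_{i=1}^{N−1} (q·u_Y(X_i^+;t) − p·u_Y(X;t))·1[x_{i+1} ≠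 x_i + 1] + (q·u_Y(X_N^+;t) − p·u_Y(X;t))·1[x_1 ≠ x_N − L + 1]. -/
open scoped BigOperators

noncomputable section

/-- The configuration space `𝒳_N(L)`: strictly increasing with `x_N < x_1 + L`. -/
def ASEPconf (L : ℕ) {N : ℕ} (X : Fin N → ℤ) : Prop :=
  StrictMono X ∧ ∀ i j : Fin N, X j < X i + (L : ℤ)

/-- `X_i^−`. -/
def updM {N : ℕ} (X : Fin N → ℤ) (i : Fin N) : Fin N → ℤ := Function.update X i (X i - 1)

/-- `X_i^+`. -/
def updP {N : ℕ} (X : Fin N → ℤ) (i : Fin N) : Fin N → ℤ := Function.update X i (X i + 1)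

/-- **Lemma (coordinate Bethe ansatz reduction for the ASEP on a ring).**
If the functions `u_Y(X;t)` satisfy the free equation together with the boundary conditions,
then for configurations `X, Y ∈ 𝒳_N(L)` they satisfy the ASEP master equation. -/
theorem asep_free_plus_boundary_implies_master
    (N L : ℕ) (hN : 1 ≤ N) (hNL : N ≤ L)
    (p q : ℝ) (hp0 : 0 < p) (hp1 : p < 1) (hq0 : 0 < q) (hq1 : q < 1) (hpq : p + q = 1)
    (u : (Fin N → ℤ) → (Fin N → ℤ) → ℝ → ℝ)
    (hfree : ∀ (Y X : Fin N → ℤ) (t : ℝ), 0 ≤ t →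
      HasDerivWithinAt (fun s : ℝ => u Y X s)
        (∑ i : Fin N, (p * u Y (updM X i) t + q * u Y (updP X i) t - u Y X t))
        (Set.Ici (0 : ℝ)) t)
    (hbdry1 : ∀ (Y X : Fin N → ℤ) (t : ℝ), 0 ≤ t →
      X ⟨N - 1, Nat.sub_lt hN Nat.one_pos⟩ + 1 = X ⟨0, hN⟩ + (L : ℤ) →
      u Y X t = p * u Y (updM X ⟨0, hN⟩) t
        + q * u Y (updP X ⟨N - 1, Nat.sub_lt hN Nat.one_pos⟩) t)
    (hbdry2 : ∀ (Y X : Fin N → ℤ) (t : ℝ), 0 ≤ t → ∀ i : Fin N, 0 < i.val →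
      X i = X ⟨i.val - 1, lt_of_le_of_lt (Nat.sub_le _ _) i.isLt⟩ + 1 →
      u Y X t = p * u Y (updM X i) t
        + q * u Y (updP X ⟨i.val - 1, lt_of_le_of_lt (Nat.sub_le _ _) i.isLt⟩) t)
    (X Y : Fin N → ℤ) (hX : ASEPconf L X) (hY : ASEPconf L Y) (t : ℝ) (ht : 0 ≤ t) :
    HasDerivWithinAt (fun s : ℝ => u Y X s)
      ((∑ i : Fin N,
          if 0 < i.val then
            (if X ⟨i.val - 1, lt_of_le_of_lt (Nat.sub_le _ _) i.isLt⟩ ≠ X i - 1 then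
              p * u Y (updM X i) t - q * u Y X t
            else 0)
          else 0) +
        (if X ⟨N - 1, Nat.sub_lt hN Nat.one_pos⟩ ≠ X ⟨0, hN⟩ + (L : ℤ) - 1 then
          p * u Y (updM X ⟨0, hN⟩) t - q * u Y X t
        else 0) +
        (∑ i : Fin N,
          if h : i.val + 1 < N then
            (if X ⟨i.val + 1, h⟩ ≠ X i + 1 then
              q * u Y (updP X i) t - p * u Y X t
            else 0)
          else 0) +
        (if X ⟨0, hN⟩ ≠ X ⟨N - 1, Nat.sub_lt hN Nat.one_pos⟩ - (L : ℤ) + 1 then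
          q * u Y (updP X ⟨N - 1, Nat.sub_lt hN Nat.one_pos⟩) t - p * u Y X t
        else 0))
      (Set.Ici (0 : ℝ)) t := by
  obtain ⟨n, rfl⟩ : ∃ n, N = n + 1 := ⟨N - 1, (Nat.succ_pred_eq_of_pos hN).symm⟩
  have h := hfree Y X t ht
  have hm : ∀ i : Fin (n+1),
      p * u Y (updM X i) t + q * u Y (updP X i) t - u Y X t
        = (p * u Y (updM X i) t - q * u Y X t)
          + (q * u Y (updP X i) t - p * u Y X t) := by
    intro i; linear_combination (u Y X t) * hpq
  convert h using 1
  simp only [hm]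
  rw [Finset.sum_add_distrib]
  conv_lhs => rw [Fin.sum_univ_succ]
  conv_lhs => enter [1,2]; rw [Fin.sum_univ_castSucc]
  conv_rhs => rw [Fin.sum_univ_succ]
  conv_rhs => enter [2]; rw [Fin.sum_univ_castSucc]
  simp only [Fin.val_zero, lt_self_iff_false, if_false, Fin.val_succ, Nat.add_sub_cancel,
    Nat.succ_pos, if_true, Fin.val_last, lt_irrefl, dif_neg, Fin.coe_castSucc,
    Nat.add_lt_add_iff_right, Fin.is_lt, dif_pos, zero_add, add_zero]
  have hcast : ∀ (x : Fin n) (hx : (x:ℕ) < n + 1), (⟨(x:ℕ), hx⟩ : Fin (n+1)) = x.castSucc :=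
    fun x hx => rfl
  have hsucc : ∀ (x : Fin n) (hx : (x:ℕ)+1 < n + 1), (⟨(x:ℕ)+1, hx⟩ : Fin (n+1)) = x.succ :=
    fun x hx => rfl
  have hlast : ∀ (hx : n < n + 1), (⟨n, hx⟩ : Fin (n+1)) = Fin.last n := fun hx => rfl
  have hzero : (⟨0, hN⟩ : Fin (n+1)) = 0 := rfl
  simp only [hcast, hsucc, hlast, hzero, dite_false]
  have h1 : (∑ x : Fin n, if X x.castSucc ≠ X x.succ - 1 then
          p * u Y (updM X x.succ) t - q * u Y X t else 0)
      + (∑ x : Fin n, if X x.succ ≠ X x.castSucc + 1 then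
          q * u Y (updP X x.castSucc) t - p * u Y X t else 0)
      = (∑ i : Fin n, (p * u Y (updM X i.succ) t - q * u Y X t))
      + (∑ i : Fin n, (q * u Y (updP X i.castSucc) t - p * u Y X t)) := by
    rw [← Finset.sum_add_distrib, ← Finset.sum_add_distrib]
    refine Finset.sum_congr rfl fun i _ => ?_
    by_cases hadj : X i.succ = X i.castSucc + 1
    · have hb : u Y X t = p * u Y (updM X i.succ) t + q * u Y (updP X i.castSucc) t :=
        hbdry2 Y X t ht i.succ (Nat.succ_pos _) hadj
      rw [if_neg (by omega), if_neg (by omega)]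
      linear_combination hb + (u Y X t) * hpq
    · rw [if_pos (by omega), if_pos hadj]
  have h2 : ((if X (Fin.last n) ≠ X 0 + (L:ℤ) - 1 then
          p * u Y (updM X 0) t - q * u Y X t else 0)
      + (if X 0 ≠ X (Fin.last n) - (L:ℤ) + 1 then
          q * u Y (updP X (Fin.last n)) t - p * u Y X t else 0))
      = (p * u Y (updM X 0) t - q * u Y X t)
      + (q * u Y (updP X (Fin.last n)) t - p * u Y X t) := by
    by_cases hadj : X (Fin.last n) + 1 = X 0 + (L:ℤ)
    · have hb : u Y X t = p * u Y (updM X 0) t + q * u Y (updP X (Fin.last n)) t :=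
        hbdry1 Y X t ht hadj
      rw [if_neg (by omega), if_neg (by omega)]
      linear_combination hb + (u Y X t) * hpq
    · rw [if_pos (by omega), if_pos (by omega)]
  linear_combination h1 + h2
end
end

section
/- For every n ≥ 1, 0 ≤ s ≤ n, every t ∈ ℂ, and all complex w_1,…,w_n with q·w_i ≠ w_j for all i ≠ j: Σ_{I ⊆ {1,…,n}, |I| = s} B_s(w_I) · B_{n−s}(w_{I^c}) · (∏_{j∈I^c} (1 − t·w_j)) · G(I, I^c) = B_n(w_1,…,w_n) Σ_{k=0}^{n−s} (−1)^k [n−k choose s]_q e_k(w_1,…,w_n) t^k, where I^c = {1,…,n} \ I, e_k is the k-th elementary symmetric polynomial, and w_I denotes the variables with indices in I listed in increasing order. -/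
open scoped BigOperators

noncomputable section

/-- The q-deformed factorial `[m]_q!`. -/
def qfact (q : ℝ) (m : ℕ) : ℝ := (∏ j ∈ Finset.Icc 1 m, (1 - q ^ j)) / (1 - q) ^ m

/-- The Gaussian binomial coefficient `[n choose k]_q`. -/
def qbinom (q : ℝ) (n k : ℕ) : ℝ :=
  if k ≤ n then qfact q n / (qfact q k * qfact q (n - k)) else 0

/-- `B_{|S|}(w_S) = ∏_{i<j ∈ S} (w_i − w_j)/(q w_i − w_j)`. -/
def Bfin (q : ℝ) {n : ℕ} (w : Fin n → ℂ) (S : Finset (Fin n)) : ℂ :=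
  ∏ i ∈ S, ∏ j ∈ S, if i < j then (w i - w j) / ((q : ℂ) * w i - w j) else 1

/-- `G(S, T) = ∏_{α∈S, β∈T, α>β} ( −(q w_α − w_β)/(q w_β − w_α) )`. -/
def Gpair (q : ℝ) {n : ℕ} (w : Fin n → ℂ) (S T : Finset (Fin n)) : ℂ :=
  ∏ a ∈ S, ∏ b ∈ T,
    if b < a then -(((q : ℂ) * w a - w b) / ((q : ℂ) * w b - w a)) else 1

/-- The elementary symmetric polynomial `e_k(w_1,…,w_n)`. -/
def esym {n : ℕ} (w : Fin n → ℂ) (k : ℕ) : ℂ :=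
  ∑ S ∈ Finset.powersetCard k (Finset.univ : Finset (Fin n)), ∏ a ∈ S, w a
section AuxProof

variable {q : ℝ}

section
variable (hq0 : 0 < q) (hq1 : q < 1)
include hq0 hq1
set_option linter.unusedSectionVars false

lemma one_sub_pow_pos (j : ℕ) (hj : 1 ≤ j) : 0 < 1 - q ^ j := by
  have : q ^ j < 1 := pow_lt_one₀ hq0.le hq1 (by omega)
  linarith

lemma qfact_pos (m : ℕ) : 0 < qfact q m := by
  unfold qfact
  apply div_pos
  · exact Finset.prod_pos fun j hj => one_sub_pow_pos hq0 hq1 j (Finset.mem_Icc.mp hj).1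
  · have h1 : (0:ℝ) < 1 - q := by linarith
    positivity

lemma qfact_ne_zero (m : ℕ) : qfact q m ≠ 0 := (qfact_pos hq0 hq1 m).ne'

lemma qfact_zero : qfact q 0 = 1 := by simp [qfact]

lemma qfact_succ (m : ℕ) : qfact q (m + 1) = qfact q m * ((1 - q ^ (m+1)) / (1 - q)) := by
  unfold qfact
  rw [Finset.prod_Icc_succ_top (by omega)]
  rw [pow_succ]
  field_simp
  ring

lemma qbinom_zero (m : ℕ) : qbinom q m 0 = 1 := by
  rw [qbinom, if_pos (Nat.zero_le m), qfact_zero hq0 hq1, one_mul, Nat.sub_zero,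
    div_self (qfact_ne_zero hq0 hq1 m)]

lemma qbinom_self (m : ℕ) : qbinom q m m = 1 := by
  rw [qbinom, if_pos le_rfl, Nat.sub_self, qfact_zero hq0 hq1, mul_one,
    div_self (qfact_ne_zero hq0 hq1 m)]

lemma qbinom_of_gt {m k : ℕ} (h : m < k) : qbinom q m k = 0 := by
  simp [qbinom, Nat.not_le.mpr h]

lemma qbinom_pascal (N s : ℕ) (h : s ≤ N) :
    qbinom q (N + 1) (s + 1) = qbinom q N (s + 1) + q ^ (N - s) * qbinom q N s := by
  rcases eq_or_lt_of_le h with rfl | hlt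
  · rw [qbinom_self hq0 hq1, qbinom_self hq0 hq1, qbinom_of_gt hq0 hq1 (by omega)]
    simp
  · obtain ⟨d, rfl⟩ : ∃ d, N = s + d + 1 := ⟨N - s - 1, by omega⟩
    have e1 : s + 1 ≤ s + d + 2 := by omega
    have e2 : s + 1 ≤ s + d + 1 := by omega
    have e3 : s ≤ s + d + 1 := by omega
    rw [qbinom, qbinom, qbinom, if_pos e1, if_pos e2, if_pos e3]
    have r1 : s + d + 2 - (s + 1) = d + 1 := by omega
    have r2 : s + d + 1 - (s + 1) = d := by omega
    have r3 : s + d + 1 - s = d + 1 := by omega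
    have r4 : s + d + 1 - s = d + 1 := by omega
    rw [r1, r2, r3]
    have h1 : qfact q (s + d + 2) = qfact q (s + d + 1) * ((1 - q ^ (s+d+2)) / (1 - q)) :=
      qfact_succ hq0 hq1 (s + d + 1)
    have h2 : qfact q (s + 1) = qfact q s * ((1 - q ^ (s+1)) / (1 - q)) := qfact_succ hq0 hq1 s
    have h3 : qfact q (d + 1) = qfact q d * ((1 - q ^ (d+1)) / (1 - q)) := qfact_succ hq0 hq1 d
    have hs := qfact_ne_zero hq0 hq1 s
    have hd := qfact_ne_zero hq0 hq1 d
    have hsd := qfact_ne_zero hq0 hq1 (s + d + 1)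
    have hq : (1:ℝ) - q ≠ 0 := by linarith
    have hs1 : (1:ℝ) - q ^ (s+1) ≠ 0 := (one_sub_pow_pos hq0 hq1 _ (by omega)).ne'
    have hd1 : (1:ℝ) - q ^ (d+1) ≠ 0 := (one_sub_pow_pos hq0 hq1 _ (by omega)).ne'
    have hpow : q ^ (s + d + 2) = q ^ (d + 1) * q ^ (s + 1) := by
      rw [← pow_add]; ring_nf
    rw [h1, h2, h3]
    field_simp
    ring_nf

end

lemma sum_powersetCard_split {ι M : Type*} [DecidableEq ι] [AddCommMonoid M]
    {A : Finset ι} {j : ι} (hj : j ∈ A) (s : ℕ) (f : Finset ι → M) :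
    ∑ I ∈ A.powersetCard (s+1), f I
      = ∑ I ∈ (A.erase j).powersetCard (s+1), f I
        + ∑ I ∈ (A.erase j).powersetCard s, f (insert j I) := by
  conv_lhs => rw [← Finset.insert_erase hj]
  rw [Finset.powersetCard_succ_insert (Finset.notMem_erase j A) s]
  rw [Finset.sum_union, Finset.sum_image]
  · intro x hx y hy hxy
    have hxj : j ∉ x := fun h => (Finset.notMem_erase j A)
      ((Finset.mem_powersetCard.mp hx).1 h)
    have hyj : j ∉ y := fun h => (Finset.notMem_erase j A)
      ((Finset.mem_powersetCard.mp hy).1 h)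
    have := Finset.erase_insert hxj
    rw [← Finset.erase_insert hxj, ← Finset.erase_insert hyj, hxy]
  · rw [Finset.disjoint_left]
    intro I hI hI'
    obtain ⟨I', hI', rfl⟩ := Finset.mem_image.mp hI'
    exact (Finset.notMem_erase j A) ((Finset.mem_powersetCard.mp hI).1 (Finset.mem_insert_self j I'))

lemma sum_shift (hq0 : 0 < q) (hq1 : q < 1) (m s Nn : ℕ) (hNn : Nn = m + s + 1)
    (E EA : ℕ → ℂ) (wj y : ℂ) (hy : wj * y = 1)
    (hEA0 : EA 0 = E 0) (hEAs : ∀ k, EA (k+1) = E (k+1) + wj * E k) :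
    (q:ℂ)^m * ∑ k ∈ Finset.range (m+1),
        ((-1:ℂ)^k * ((qbinom q (Nn - 1 - k) s : ℝ):ℂ) * E k) * ((q:ℂ)⁻¹ * y)^k
      = ∑ k ∈ Finset.range (m+1),
        ((-1:ℂ)^k * ((qbinom q (Nn - k) (s+1) : ℝ):ℂ) * EA k) * y^k := by
  have hqC : (q:ℂ) ≠ 0 := by
    simpa using (show (q:ℝ) ≠ 0 from hq0.ne')
  have hL : (q:ℂ)^m * ∑ k ∈ Finset.range (m+1),
        ((-1:ℂ)^k * ((qbinom q (Nn - 1 - k) s : ℝ):ℂ) * E k) * ((q:ℂ)⁻¹ * y)^k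
      = ∑ k ∈ Finset.range (m+1),
        ((-1:ℂ)^k * (((q^(m-k) * qbinom q (Nn - 1 - k) s : ℝ)):ℂ) * E k) * y^k := by
    rw [Finset.mul_sum]
    apply Finset.sum_congr rfl
    intro k hk
    have hkm : k ≤ m := by have := Finset.mem_range.mp hk; omega
    have h2 : (q:ℂ)^m * ((q:ℂ)⁻¹)^k = (q:ℂ)^(m-k) := by
      have h3 : (q:ℂ)^(m-k) * (q:ℂ)^k = (q:ℂ)^m := by rw [← pow_add]; congr 1; omega
      rw [← h3, inv_pow, mul_assoc, mul_inv_cancel₀ (pow_ne_zero k hqC), mul_one]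
    push_cast
    rw [mul_pow, ← h2]
    ring
  rw [hL]
  set g : ℕ → ℂ := fun k => ((-1:ℂ)^k * ((qbinom q (Nn - k) (s+1) : ℝ):ℂ) * E k) * y^k with hg
  set h : ℕ → ℂ := fun k => ((-1:ℂ)^k * ((qbinom q (Nn - 1 - k) (s+1) : ℝ):ℂ) * E k) * y^k with hh
  have key : ∀ k, k ≤ m → (qbinom q (Nn - k) (s+1) : ℝ)
      = qbinom q (Nn - 1 - k) (s+1) + q^(m-k) * qbinom q (Nn - 1 - k) s := by
    intro k hk
    have hp := qbinom_pascal hq0 hq1 (Nn - 1 - k) s (by omega)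
    rw [show Nn - 1 - k + 1 = Nn - k by omega, show Nn - 1 - k - s = m - k by omega] at hp
    exact hp
  have hwy : ∀ k : ℕ, wj * y^(k+1) = y^k := by
    intro k
    calc wj * y^(k+1) = (wj * y) * y^k := by rw [pow_succ]; ring
      _ = y^k := by rw [hy, one_mul]
  have hm0 : h m = 0 := by
    rw [hh]
    simp only []
    rw [show Nn - 1 - m = s by omega, qbinom_of_gt hq0 hq1 (Nat.lt_succ_self s)]
    push_cast
    ring
  rw [Finset.sum_range_succ' (fun k => ((-1:ℂ)^k * ((qbinom q (Nn - k) (s+1) : ℝ):ℂ) * EA k) * y^k) m]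
  calc ∑ k ∈ Finset.range (m+1),
        ((-1:ℂ)^k * (((q^(m-k) * qbinom q (Nn - 1 - k) s : ℝ)):ℂ) * E k) * y^k
      = ∑ k ∈ Finset.range (m+1), (g k - h k) := by
        apply Finset.sum_congr rfl
        intro k hk
        have hkm : k ≤ m := by have := Finset.mem_range.mp hk; omega
        rw [hg, hh]
        simp only []
        push_cast [key k hkm]
        ring
    _ = ∑ k ∈ Finset.range (m+1), g k - ∑ k ∈ Finset.range (m+1), h k := by
        rw [Finset.sum_sub_distrib]
    _ = (∑ k ∈ Finset.range m, g (k+1) + g 0) - (∑ k ∈ Finset.range m, h k + h m) := by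
        rw [Finset.sum_range_succ' g m, Finset.sum_range_succ h m]
    _ = ∑ k ∈ Finset.range m, (g (k+1) - h k) + g 0 := by
        rw [hm0, Finset.sum_sub_distrib]
        ring
    _ = ∑ k ∈ Finset.range m, ((-1:ℂ)^(k+1) * ((qbinom q (Nn - (k+1)) (s+1) : ℝ):ℂ) * EA (k+1)) * y^(k+1)
          + ((-1:ℂ)^0 * ((qbinom q (Nn - 0) (s+1) : ℝ):ℂ) * EA 0) * y^0 := by
        congr 1
        · apply Finset.sum_congr rfl
          intro k hk
          rw [hEAs k, hg, hh]
          simp only []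
          rw [show Nn - (k+1) = Nn - 1 - k by omega]
          linear_combination ((-1:ℂ)^k * ((qbinom q (Nn - 1 - k) (s+1) : ℝ):ℂ) * E k) * hwy k
        · rw [hg]
          simp only []
          rw [hEA0]

lemma core (hq0 : 0 < q) (hq1 : q < 1) {n : ℕ} (w : Fin n → ℂ) :
    ∀ s : ℕ, ∀ A : Finset (Fin n),
      (∀ i ∈ A, ∀ j ∈ A, i ≠ j → w i ≠ w j) → (∀ i ∈ A, w i ≠ 0) → s ≤ A.card → ∀ t : ℂ,
      (∑ I ∈ A.powersetCard s, (∏ a ∈ I, ∏ b ∈ A \ I, ((q:ℂ) * w a - w b) / (w a - w b))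
          * ∏ b ∈ A \ I, (1 - t * w b))
        = ∑ k ∈ Finset.range (A.card - s + 1),
            (-1:ℂ)^k * ((qbinom q (A.card - k) s : ℝ):ℂ)
              * (∑ S ∈ A.powersetCard k, ∏ a ∈ S, w a) * t ^ k := by
  intro s
  induction s with
  | zero =>
    intro A _ _ _ t
    rw [Finset.powersetCard_zero, Finset.sum_singleton]
    simp only [Finset.prod_empty, Finset.sdiff_empty, one_mul, Nat.sub_zero]
    have h1 : ∀ b ∈ A, (1 - t * w b) = (-(t * w b)) + 1 := by intro b _; ring
    rw [Finset.prod_congr rfl h1, Finset.prod_add, Finset.sum_powerset]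
    apply Finset.sum_congr rfl
    intro k hk
    rw [Finset.mul_sum, Finset.sum_mul]
    apply Finset.sum_congr rfl
    intro S hS
    obtain ⟨hSA, hScard⟩ := Finset.mem_powersetCard.mp hS
    rw [qbinom_zero hq0 hq1]
    push_cast
    rw [Finset.prod_const_one, mul_one]
    have h2 : ∀ b ∈ S, (-(t * w b)) = (-1) * t * w b := by intro b _; ring
    rw [Finset.prod_congr rfl h2, Finset.prod_mul_distrib, Finset.prod_mul_distrib,
      Finset.prod_const, Finset.prod_const, hScard]
    ring
  | succ s IH =>
    intro A hinj h0 hs t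
    have hqC : (q:ℂ) ≠ 0 := by
      simpa using (show (q:ℝ) ≠ 0 from hq0.ne')
    set m := A.card - (s+1) with hm
    -- Evaluation at the points (w j)⁻¹
    have heval : ∀ j ∈ A,
        (∑ I ∈ A.powersetCard (s+1),
            (∏ a ∈ I, ∏ b ∈ A \ I, ((q:ℂ) * w a - w b) / (w a - w b))
              * ∏ b ∈ A \ I, (1 - (w j)⁻¹ * w b))
          = ∑ k ∈ Finset.range (m+1),
              (-1:ℂ)^k * ((qbinom q (A.card - k) (s+1) : ℝ):ℂ)
                * (∑ S ∈ A.powersetCard k, ∏ a ∈ S, w a) * ((w j)⁻¹) ^ k := by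
      intro j hj
      have hwj : w j ≠ 0 := h0 j hj
      have hBsub : A.erase j ⊆ A := Finset.erase_subset j A
      have hBcard : (A.erase j).card = A.card - 1 := Finset.card_erase_of_mem hj
      have hcard1 : s + 1 ≤ A.card := hs
      rw [sum_powersetCard_split hj s]
      have hzero : ∑ I ∈ (A.erase j).powersetCard (s+1),
          (∏ a ∈ I, ∏ b ∈ A \ I, ((q:ℂ) * w a - w b) / (w a - w b))
            * ∏ b ∈ A \ I, (1 - (w j)⁻¹ * w b) = 0 := by
        apply Finset.sum_eq_zero
        intro I hI
        obtain ⟨hIB, _⟩ := Finset.mem_powersetCard.mp hI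
        have hjI : j ∈ A \ I := by
          rw [Finset.mem_sdiff]
          exact ⟨hj, fun h => (Finset.notMem_erase j A) (hIB h)⟩
        have hz : (1 - (w j)⁻¹ * w j) = 0 := by rw [inv_mul_cancel₀ hwj, sub_self]
        rw [Finset.prod_eq_zero hjI hz, mul_zero]
      rw [hzero, zero_add]
      -- rewrite each term
      have hterm : ∀ I ∈ (A.erase j).powersetCard s,
          (∏ a ∈ insert j I, ∏ b ∈ A \ insert j I, ((q:ℂ) * w a - w b) / (w a - w b))
              * ∏ b ∈ A \ insert j I, (1 - (w j)⁻¹ * w b)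
            = (q:ℂ)^m * ((∏ a ∈ I, ∏ b ∈ (A.erase j) \ I, ((q:ℂ) * w a - w b) / (w a - w b))
                * ∏ b ∈ (A.erase j) \ I, (1 - ((q:ℂ) * w j)⁻¹ * w b)) := by
        intro I hI
        obtain ⟨hIB, hIcard⟩ := Finset.mem_powersetCard.mp hI
        have hjI : j ∉ I := fun h => (Finset.notMem_erase j A) (hIB h)
        have hAI : A \ insert j I = (A.erase j) \ I := by
          ext b
          simp only [Finset.mem_sdiff, Finset.mem_insert, Finset.mem_erase]
          tauto
        rw [hAI, Finset.prod_insert hjI]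
        have hBIcard : ((A.erase j) \ I).card = m := by
          rw [Finset.card_sdiff_of_subset hIB, hBcard, hIcard]
          omega
        have hptw : ∀ b ∈ (A.erase j) \ I,
            (((q:ℂ) * w j - w b) / (w j - w b)) * (1 - (w j)⁻¹ * w b)
              = (q:ℂ) * (1 - ((q:ℂ) * w j)⁻¹ * w b) := by
          intro b hb
          have hbB : b ∈ A.erase j := (Finset.mem_sdiff.mp hb).1
          have hbj : b ≠ j := (Finset.mem_erase.mp hbB).1
          have hbA : b ∈ A := (Finset.mem_erase.mp hbB).2
          have hne : w j - w b ≠ 0 := sub_ne_zero.mpr (hinj j hj b hbA (Ne.symm hbj))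
          field_simp
        calc (∏ b ∈ (A.erase j) \ I, ((q:ℂ) * w j - w b) / (w j - w b))
              * (∏ a ∈ I, ∏ b ∈ (A.erase j) \ I, ((q:ℂ) * w a - w b) / (w a - w b))
              * ∏ b ∈ (A.erase j) \ I, (1 - (w j)⁻¹ * w b)
            = (∏ b ∈ (A.erase j) \ I, (((q:ℂ) * w j - w b) / (w j - w b)) * (1 - (w j)⁻¹ * w b))
              * (∏ a ∈ I, ∏ b ∈ (A.erase j) \ I, ((q:ℂ) * w a - w b) / (w a - w b)) := by
              rw [Finset.prod_mul_distrib]; ring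
          _ = (∏ _b ∈ (A.erase j) \ I, (q:ℂ))
                * (∏ b ∈ (A.erase j) \ I, (1 - ((q:ℂ) * w j)⁻¹ * w b))
              * (∏ a ∈ I, ∏ b ∈ (A.erase j) \ I, ((q:ℂ) * w a - w b) / (w a - w b)) := by
              rw [Finset.prod_congr rfl hptw, Finset.prod_mul_distrib]
          _ = (q:ℂ)^m * ((∏ a ∈ I, ∏ b ∈ (A.erase j) \ I, ((q:ℂ) * w a - w b) / (w a - w b))
                * ∏ b ∈ (A.erase j) \ I, (1 - ((q:ℂ) * w j)⁻¹ * w b)) := by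
              rw [Finset.prod_const, hBIcard]; ring
      rw [Finset.sum_congr rfl hterm, ← Finset.mul_sum]
      have hinjB : ∀ i ∈ A.erase j, ∀ i' ∈ A.erase j, i ≠ i' → w i ≠ w i' :=
        fun i hi i' hi' hne => hinj i (hBsub hi) i' (hBsub hi') hne
      have h0B : ∀ i ∈ A.erase j, w i ≠ 0 := fun i hi => h0 i (hBsub hi)
      have hsB : s ≤ (A.erase j).card := by omega
      rw [IH (A.erase j) hinjB h0B hsB (((q:ℂ) * w j)⁻¹)]
      have hrange : (A.erase j).card - s = m := by omega
      rw [hrange, hBcard]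
      -- now the q-binomial sum manipulation
      have hEA0 : (∑ S ∈ Finset.powersetCard 0 A, ∏ a ∈ S, w a)
          = ∑ S ∈ Finset.powersetCard 0 (A.erase j), ∏ a ∈ S, w a := by
        simp [Finset.powersetCard_zero]
      have hEAs : ∀ k : ℕ, (∑ S ∈ Finset.powersetCard (k+1) A, ∏ a ∈ S, w a)
          = (∑ S ∈ Finset.powersetCard (k+1) (A.erase j), ∏ a ∈ S, w a)
            + w j * ∑ S ∈ Finset.powersetCard k (A.erase j), ∏ a ∈ S, w a := by
        intro k
        rw [sum_powersetCard_split hj k (fun S => ∏ a ∈ S, w a), Finset.mul_sum]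
        congr 1
        apply Finset.sum_congr rfl
        intro S hS
        obtain ⟨hSB, _⟩ := Finset.mem_powersetCard.mp hS
        have hjS : j ∉ S := fun hmem => (Finset.notMem_erase j A) (hSB hmem)
        rw [Finset.prod_insert hjS]
      rw [mul_inv]
      exact sum_shift hq0 hq1 m s A.card (by omega)
        (fun k => ∑ S ∈ Finset.powersetCard k (A.erase j), ∏ a ∈ S, w a)
        (fun k => ∑ S ∈ Finset.powersetCard k A, ∏ a ∈ S, w a)
        (w j) ((w j)⁻¹) (mul_inv_cancel₀ hwj) hEA0 hEAs
    -- polynomial argument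
    have hevalP : ∀ x : ℂ,
        Polynomial.eval x
          ((∑ I ∈ A.powersetCard (s+1), Polynomial.C
              (∏ a ∈ I, ∏ b ∈ A \ I, ((q:ℂ) * w a - w b) / (w a - w b))
                * ∏ b ∈ A \ I, (1 - Polynomial.C (w b) * Polynomial.X))
            - ∑ k ∈ Finset.range (m+1), Polynomial.C
                ((-1:ℂ)^k * ((qbinom q (A.card - k) (s+1) : ℝ):ℂ)
                  * (∑ S ∈ A.powersetCard k, ∏ a ∈ S, w a)) * Polynomial.X ^ k)
          = (∑ I ∈ A.powersetCard (s+1),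
              (∏ a ∈ I, ∏ b ∈ A \ I, ((q:ℂ) * w a - w b) / (w a - w b))
                * ∏ b ∈ A \ I, (1 - x * w b))
            - ∑ k ∈ Finset.range (m+1),
                (-1:ℂ)^k * ((qbinom q (A.card - k) (s+1) : ℝ):ℂ)
                  * (∑ S ∈ A.powersetCard k, ∏ a ∈ S, w a) * x ^ k := by
      intro x
      rw [Polynomial.eval_sub, Polynomial.eval_finset_sum, Polynomial.eval_finset_sum]
      congr 1
      · apply Finset.sum_congr rfl
        intro I _
        rw [Polynomial.eval_mul, Polynomial.eval_C, Polynomial.eval_prod]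
        congr 1
        apply Finset.prod_congr rfl
        intro b _
        rw [Polynomial.eval_sub, Polynomial.eval_one, Polynomial.eval_mul,
          Polynomial.eval_C, Polynomial.eval_X]
        ring
      · apply Finset.sum_congr rfl
        intro k _
        rw [Polynomial.eval_mul, Polynomial.eval_C, Polynomial.eval_pow, Polynomial.eval_X]
    have hdeg : ((∑ I ∈ A.powersetCard (s+1), Polynomial.C
              (∏ a ∈ I, ∏ b ∈ A \ I, ((q:ℂ) * w a - w b) / (w a - w b))
                * ∏ b ∈ A \ I, (1 - Polynomial.C (w b) * Polynomial.X))
            - ∑ k ∈ Finset.range (m+1), Polynomial.C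
                ((-1:ℂ)^k * ((qbinom q (A.card - k) (s+1) : ℝ):ℂ)
                  * (∑ S ∈ A.powersetCard k, ∏ a ∈ S, w a)) * Polynomial.X ^ k).natDegree
          < A.card := by
      have hb1 : (∑ I ∈ A.powersetCard (s+1), Polynomial.C
              (∏ a ∈ I, ∏ b ∈ A \ I, ((q:ℂ) * w a - w b) / (w a - w b))
                * ∏ b ∈ A \ I, (1 - Polynomial.C (w b) * Polynomial.X)).natDegree ≤ m := by
        apply Polynomial.natDegree_sum_le_of_forall_le
        intro I hI
        obtain ⟨hIA, hIcard⟩ := Finset.mem_powersetCard.mp hI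
        refine le_trans Polynomial.natDegree_mul_le ?_
        rw [Polynomial.natDegree_C, zero_add]
        refine le_trans (Polynomial.natDegree_prod_le _ _) ?_
        have hone : ∀ b ∈ A \ I, (1 - Polynomial.C (w b) * Polynomial.X).natDegree ≤ 1 := by
          intro b _
          have : (1 - Polynomial.C (w b) * Polynomial.X)
              = Polynomial.C (-(w b)) * Polynomial.X + Polynomial.C 1 := by
            rw [Polynomial.C_neg, Polynomial.C_1]
            ring
          rw [this]
          exact Polynomial.natDegree_linear_le
        refine le_trans (Finset.sum_le_sum hone) ?_
        rw [Finset.sum_const, smul_eq_mul, mul_one, Finset.card_sdiff_of_subset hIA, hIcard]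
      have hb2 : (∑ k ∈ Finset.range (m+1), Polynomial.C
                ((-1:ℂ)^k * ((qbinom q (A.card - k) (s+1) : ℝ):ℂ)
                  * (∑ S ∈ A.powersetCard k, ∏ a ∈ S, w a)) * Polynomial.X ^ k).natDegree
            ≤ m := by
        apply Polynomial.natDegree_sum_le_of_forall_le
        intro k hk
        refine le_trans Polynomial.natDegree_mul_le ?_
        rw [Polynomial.natDegree_C, zero_add, Polynomial.natDegree_X_pow]
        have := Finset.mem_range.mp hk
        omega
      refine lt_of_le_of_lt (Polynomial.natDegree_sub_le _ _) ?_
      have : m < A.card := by omega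
      exact lt_of_le_of_lt (sup_le hb1 hb2) this
    have hP : ((∑ I ∈ A.powersetCard (s+1), Polynomial.C
              (∏ a ∈ I, ∏ b ∈ A \ I, ((q:ℂ) * w a - w b) / (w a - w b))
                * ∏ b ∈ A \ I, (1 - Polynomial.C (w b) * Polynomial.X))
            - ∑ k ∈ Finset.range (m+1), Polynomial.C
                ((-1:ℂ)^k * ((qbinom q (A.card - k) (s+1) : ℝ):ℂ)
                  * (∑ S ∈ A.powersetCard k, ∏ a ∈ S, w a)) * Polynomial.X ^ k) = 0 := by
      apply Polynomial.eq_zero_of_natDegree_lt_card_of_eval_eq_zero' _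
        (A.image fun j => (w j)⁻¹)
      · intro x hx
        obtain ⟨j, hj, rfl⟩ := Finset.mem_image.mp hx
        rw [hevalP, sub_eq_zero]
        exact heval j hj
      · rw [Finset.card_image_of_injOn]
        · exact hdeg
        · intro i hi i' hi' hii
          by_contra hne
          exact hinj i (Finset.mem_coe.mp hi) i' (Finset.mem_coe.mp hi') hne
            (inv_injective hii)
    have hfin := hevalP t
    rw [hP, Polynomial.eval_zero] at hfin
    exact sub_eq_zero.mp hfin.symm

theorem generic_thm
    (hq0 : 0 < q) (hq1 : q < 1)
    (n : ℕ) (s : ℕ) (hs : s ≤ n) (t : ℂ) (w : Fin n → ℂ)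
    (hw : ∀ i j : Fin n, i ≠ j → (q : ℂ) * w i ≠ w j)
    (hinj : ∀ i j : Fin n, i ≠ j → w i ≠ w j)
    (h0 : ∀ i : Fin n, w i ≠ 0) :
    (∑ I ∈ Finset.powersetCard s (Finset.univ : Finset (Fin n)),
      Bfin q w I * Bfin q w Iᶜ * (∏ j ∈ Iᶜ, (1 - t * w j)) * Gpair q w I Iᶜ)
    = Bfin q w Finset.univ *
        ∑ k ∈ Finset.range (n - s + 1),
          (-1 : ℂ) ^ k * ((qbinom q (n - k) s : ℝ) : ℂ) * esym w k * t ^ k := by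
  have key : ∀ I ∈ Finset.powersetCard s (Finset.univ : Finset (Fin n)),
      Bfin q w I * Bfin q w Iᶜ * (∏ j ∈ Iᶜ, (1 - t * w j)) * Gpair q w I Iᶜ
        = Bfin q w Finset.univ *
            ((∏ a ∈ I, ∏ b ∈ Finset.univ \ I, ((q:ℂ) * w a - w b) / (w a - w b))
              * ∏ b ∈ Finset.univ \ I, (1 - t * w b)) := by
    intro I _
    have hsd : (Iᶜ : Finset (Fin n)) = Finset.univ \ I := by
      rw [Finset.compl_eq_univ_sdiff]
    have hdisj : Disjoint I Iᶜ := disjoint_compl_right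
    -- decompose Bfin univ
    have hsplit : Bfin q w Finset.univ
        = (Bfin q w I * Bfin q w Iᶜ)
          * ∏ a ∈ I, ∏ b ∈ Iᶜ,
              ((if a < b then (w a - w b) / ((q:ℂ) * w a - w b) else 1)
                * (if b < a then (w b - w a) / ((q:ℂ) * w b - w a) else 1)) := by
      unfold Bfin
      rw [← Finset.union_compl I, Finset.prod_union hdisj]
      have inner : ∀ (S : Finset (Fin n)), ∀ i : Fin n,
          (∏ j ∈ I ∪ Iᶜ, if i < j then (w i - w j) / ((q:ℂ) * w i - w j) else 1)
            = (∏ j ∈ I, if i < j then (w i - w j) / ((q:ℂ) * w i - w j) else 1)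
              * ∏ j ∈ Iᶜ, if i < j then (w i - w j) / ((q:ℂ) * w i - w j) else 1 := by
        intro _ i; rw [Finset.prod_union hdisj]
      rw [Finset.prod_congr rfl (fun i _ => inner I i),
          Finset.prod_congr rfl (fun i _ => inner Iᶜ i),
          Finset.prod_mul_distrib, Finset.prod_mul_distrib]
      simp only [Finset.prod_mul_distrib]
      have hcomm : (∏ i ∈ Iᶜ, ∏ j ∈ I, if i < j then (w i - w j) / ((q:ℂ) * w i - w j) else 1)
          = ∏ a ∈ I, ∏ b ∈ Iᶜ, if b < a then (w b - w a) / ((q:ℂ) * w b - w a) else 1 := by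
        rw [Finset.prod_comm]
      rw [hcomm]
      ring
    have hptw : ∀ a ∈ I, ∀ b ∈ Iᶜ,
        ((if a < b then (w a - w b) / ((q:ℂ) * w a - w b) else 1)
          * (if b < a then (w b - w a) / ((q:ℂ) * w b - w a) else 1))
          * (((q:ℂ) * w a - w b) / (w a - w b))
        = (if b < a then -(((q:ℂ) * w a - w b) / ((q:ℂ) * w b - w a)) else 1) := by
      intro a ha b hb
      have hab : a ≠ b := by
        intro h; subst h
        exact (Finset.mem_compl.mp hb) ha
      have hwab : w a ≠ w b := hinj a b hab
      have h1 : (q:ℂ) * w a - w b ≠ 0 := sub_ne_zero.mpr (hw a b hab)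
      have h2 : (q:ℂ) * w b - w a ≠ 0 := sub_ne_zero.mpr (hw b a hab.symm)
      have h3 : w a - w b ≠ 0 := sub_ne_zero.mpr hwab
      rcases lt_trichotomy a b with hlt | heq | hgt
      · rw [if_pos hlt, if_neg (asymm hlt), if_neg (asymm hlt), mul_one]
        field_simp
        exact div_self (by rw [mul_comm]; exact h1)
      · exact absurd heq hab
      · rw [if_neg (asymm hgt), if_pos hgt, if_pos hgt, one_mul]
        field_simp
        ring
    have hG : Gpair q w I Iᶜ
        = ∏ a ∈ I, ∏ b ∈ Iᶜ,
            (((if a < b then (w a - w b) / ((q:ℂ) * w a - w b) else 1)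
              * (if b < a then (w b - w a) / ((q:ℂ) * w b - w a) else 1))
              * (((q:ℂ) * w a - w b) / (w a - w b))) := by
      unfold Gpair
      apply Finset.prod_congr rfl
      intro a ha
      exact (Finset.prod_congr rfl fun b hb => (hptw a ha b hb).symm)
    rw [hG]
    calc Bfin q w I * Bfin q w Iᶜ * (∏ j ∈ Iᶜ, (1 - t * w j))
          * ∏ a ∈ I, ∏ b ∈ Iᶜ,
            (((if a < b then (w a - w b) / ((q:ℂ) * w a - w b) else 1)
              * (if b < a then (w b - w a) / ((q:ℂ) * w b - w a) else 1))
              * (((q:ℂ) * w a - w b) / (w a - w b)))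
        = ((Bfin q w I * Bfin q w Iᶜ)
            * ∏ a ∈ I, ∏ b ∈ Iᶜ,
              ((if a < b then (w a - w b) / ((q:ℂ) * w a - w b) else 1)
                * (if b < a then (w b - w a) / ((q:ℂ) * w b - w a) else 1)))
          * ((∏ a ∈ I, ∏ b ∈ Iᶜ, ((q:ℂ) * w a - w b) / (w a - w b))
            * ∏ j ∈ Iᶜ, (1 - t * w j)) := by
          simp only [Finset.prod_mul_distrib]
          ring
      _ = Bfin q w Finset.univ
          * ((∏ a ∈ I, ∏ b ∈ Finset.univ \ I, ((q:ℂ) * w a - w b) / (w a - w b))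
            * ∏ b ∈ Finset.univ \ I, (1 - t * w b)) := by
          rw [← hsplit, hsd]
  rw [Finset.sum_congr rfl key, ← Finset.mul_sum]
  congr 1
  have hcard : (Finset.univ : Finset (Fin n)).card = n := by
    rw [Finset.card_univ, Fintype.card_fin]
  have := core hq0 hq1 w s Finset.univ
    (fun i _ j _ hij => hinj i j hij) (fun i _ => h0 i) (by rw [hcard]; exact hs) t
  rw [hcard] at this
  rw [this]
  apply Finset.sum_congr rfl
  intro k _
  unfold esym
  ring


open Filter Topology in
theorem qtazrp_B_identity_two_aux
    (q : ℝ) (hq0 : 0 < q) (hq1 : q < 1)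
    (n : ℕ) (s : ℕ) (hs : s ≤ n) (t : ℂ) (w : Fin n → ℂ)
    (hw : ∀ i j : Fin n, i ≠ j → (q : ℂ) * w i ≠ w j) :
    (∑ I ∈ Finset.powersetCard s (Finset.univ : Finset (Fin n)),
      Bfin q w I * Bfin q w Iᶜ * (∏ j ∈ Iᶜ, (1 - t * w j)) * Gpair q w I Iᶜ)
    = Bfin q w Finset.univ *
        ∑ k ∈ Finset.range (n - s + 1),
          (-1 : ℂ) ^ k * ((qbinom q (n - k) s : ℝ) : ℂ) * esym w k * t ^ k := by
  classical
  rw [← sub_eq_zero]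
  set F : (Fin n → ℂ) → ℂ := fun u =>
    (∑ I ∈ Finset.powersetCard s (Finset.univ : Finset (Fin n)),
      Bfin q u I * Bfin q u Iᶜ * (∏ j ∈ Iᶜ, (1 - t * u j)) * Gpair q u I Iᶜ)
    - Bfin q u Finset.univ *
        ∑ k ∈ Finset.range (n - s + 1),
          (-1 : ℂ) ^ k * ((qbinom q (n - k) s : ℝ) : ℂ) * esym u k * t ^ k with hF
  have key : ∀ u : Fin n → ℂ, (∀ i j : Fin n, i ≠ j → (q : ℂ) * u i ≠ u j) →
      (∀ i j : Fin n, i ≠ j → u i ≠ u j) → (∀ i : Fin n, u i ≠ 0) → F u = 0 := by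
    intro u hu h1 h2
    rw [hF]
    exact sub_eq_zero.mpr (generic_thm hq0 hq1 n s hs t u hu h1 h2)
  -- continuity of F at points where q * u i ≠ u j
  have hcont : ∀ u : Fin n → ℂ, (∀ i j : Fin n, i ≠ j → (q : ℂ) * u i ≠ u j) →
      ContinuousAt F u := by
    intro u hu
    have cB : ∀ S : Finset (Fin n),
        Filter.Tendsto (fun v : Fin n → ℂ => Bfin q v S) (𝓝 u) (𝓝 (Bfin q u S)) := by
      intro S
      unfold Bfin
      apply tendsto_finset_prod
      intro i _
      apply tendsto_finset_prod
      intro j _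
      by_cases h : i < j
      · simp only [if_pos h]
        exact ContinuousAt.div
          (((continuous_apply i).sub (continuous_apply j)).continuousAt)
          (((continuous_const.mul (continuous_apply i)).sub (continuous_apply j)).continuousAt)
          (sub_ne_zero.mpr (hu i j (ne_of_lt h)))
      · simp only [if_neg h]
        exact tendsto_const_nhds
    have cG : ∀ S T : Finset (Fin n),
        Filter.Tendsto (fun v : Fin n → ℂ => Gpair q v S T) (𝓝 u) (𝓝 (Gpair q u S T)) := by
      intro S T
      unfold Gpair
      apply tendsto_finset_prod
      intro a _
      apply tendsto_finset_prod
      intro b _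
      by_cases h : b < a
      · simp only [if_pos h]
        exact Filter.Tendsto.neg (ContinuousAt.div
          (((continuous_const.mul (continuous_apply a)).sub (continuous_apply b)).continuousAt)
          (((continuous_const.mul (continuous_apply b)).sub (continuous_apply a)).continuousAt)
          (sub_ne_zero.mpr (hu b a (ne_of_lt h))))
      · simp only [if_neg h]
        exact tendsto_const_nhds
    have cP : ∀ S : Finset (Fin n),
        Filter.Tendsto (fun v : Fin n → ℂ => ∏ j ∈ S, (1 - t * v j)) (𝓝 u)
          (𝓝 (∏ j ∈ S, (1 - t * u j))) := by
      intro S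
      apply tendsto_finset_prod
      intro j _
      exact ((continuous_const.sub (continuous_const.mul (continuous_apply j))).continuousAt)
    have cE : ∀ k : ℕ,
        Filter.Tendsto (fun v : Fin n → ℂ => esym v k) (𝓝 u) (𝓝 (esym u k)) := by
      intro k
      unfold esym
      apply tendsto_finset_sum
      intro S _
      apply tendsto_finset_prod
      intro a _
      exact (continuous_apply a).continuousAt
    rw [hF]
    apply Filter.Tendsto.sub
    · apply tendsto_finset_sum
      intro I _
      exact (((cB I).mul (cB Iᶜ)).mul (cP Iᶜ)).mul (cG I Iᶜ)
    · apply Filter.Tendsto.mul (cB Finset.univ)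
      apply tendsto_finset_sum
      intro k _
      exact (Filter.Tendsto.mul (tendsto_const_nhds.mul (cE k)) tendsto_const_nhds)
  -- perturbation
  set v : Fin n → ℂ := fun i => ((i : ℕ) : ℂ) + 1 with hv
  have hv0 : ∀ i : Fin n, v i ≠ 0 := by
    intro i
    rw [hv]
    have : (((i : ℕ) + 1 : ℕ) : ℂ) ≠ 0 := Nat.cast_ne_zero.mpr (Nat.succ_ne_zero _)
    push_cast at this
    exact this
  have hvinj : ∀ i j : Fin n, i ≠ j → v i ≠ v j := by
    intro i j hij h
    rw [hv] at h
    simp only [add_left_inj, Nat.cast_inj] at h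
    exact hij (Fin.ext h)
  set pert : ℂ → Fin n → ℂ := fun ε i => w i + ε * v i with hpert
  have hp0 : pert 0 = w := by
    funext i
    rw [hpert]
    simp
  have hevNe : ∀ p : ℂ, ∀ᶠ ε in 𝓝[≠] (0:ℂ), ε ≠ p := by
    intro p
    rcases eq_or_ne p 0 with rfl | hp
    · simpa using eventually_mem_nhdsWithin (a := (0:ℂ)) (s := {(0:ℂ)}ᶜ)
    · exact Filter.Eventually.filter_mono nhdsWithin_le_nhds (eventually_ne_nhds (Ne.symm hp))
  have hg1 : ∀ i j : Fin n, ∀ᶠ ε in 𝓝[≠] (0:ℂ), i ≠ j → pert ε i ≠ pert ε j := by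
    intro i j
    by_cases hij : i = j
    · exact Filter.Eventually.of_forall (fun ε h => absurd hij h)
    · have hc : v i - v j ≠ 0 := sub_ne_zero.mpr (hvinj i j hij)
      filter_upwards [hevNe ((w j - w i) / (v i - v j))] with ε hε _ heq
      rw [hpert] at heq
      simp only [] at heq
      apply hε
      rw [eq_div_iff hc]
      linear_combination heq
  have hg2 : ∀ i : Fin n, ∀ᶠ ε in 𝓝[≠] (0:ℂ), pert ε i ≠ 0 := by
    intro i
    filter_upwards [hevNe (-(w i) / v i)] with ε hε heq
    rw [hpert] at heq
    simp only [] at heq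
    apply hε
    rw [eq_div_iff (hv0 i)]
    linear_combination heq
  have hg3 : ∀ i j : Fin n, ∀ᶠ ε in 𝓝[≠] (0:ℂ), i ≠ j → (q:ℂ) * pert ε i ≠ pert ε j := by
    intro i j
    by_cases hij : i = j
    · exact Filter.Eventually.of_forall (fun ε h => absurd hij h)
    · by_cases hc : (q:ℂ) * v i - v j = 0
      · apply Filter.Eventually.of_forall
        intro ε _ heq
        rw [hpert] at heq
        simp only [] at heq
        apply hw i j hij
        linear_combination heq - ε * hc
      · filter_upwards [hevNe ((w j - (q:ℂ) * w i) / ((q:ℂ) * v i - v j))] with ε hε _ heq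
        rw [hpert] at heq
        simp only [] at heq
        apply hε
        rw [eq_div_iff hc]
        linear_combination heq
  have hev : ∀ᶠ ε in 𝓝[≠] (0:ℂ), F (pert ε) = 0 := by
    have e1 := Filter.eventually_all.mpr fun i => Filter.eventually_all.mpr fun j => hg1 i j
    have e2 := Filter.eventually_all.mpr hg2
    have e3 := Filter.eventually_all.mpr fun i => Filter.eventually_all.mpr fun j => hg3 i j
    filter_upwards [e1, e2, e3] with ε k1 k2 k3
    exact key (pert ε) (fun i j h => k3 i j h) (fun i j h => k1 i j h) k2
  have hpc : Continuous pert := by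
    rw [hpert]
    apply continuous_pi
    intro i
    exact continuous_const.add (continuous_id.mul continuous_const)
  have hc0 : ContinuousAt (fun ε => F (pert ε)) 0 := by
    show ContinuousAt (F ∘ pert) 0
    apply ContinuousAt.comp
    · rw [hp0]; exact hcont w hw
    · exact hpc.continuousAt
  have h1 : Filter.Tendsto (fun ε => F (pert ε)) (𝓝[≠] (0:ℂ)) (𝓝 (F w)) := by
    have := hc0.tendsto.mono_left (nhdsWithin_le_nhds (s := {(0:ℂ)}ᶜ))
    rwa [hp0] at this
  have h2 : Filter.Tendsto (fun ε => F (pert ε)) (𝓝[≠] (0:ℂ)) (𝓝 0) :=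
    Filter.Tendsto.congr' (by filter_upwards [hev] with x hx using hx.symm) tendsto_const_nhds
  exact tendsto_nhds_unique h1 h2


end AuxProof
/-- **Lemma (q-TAZRP summation identity, second form).** -/
theorem qtazrp_B_identity_two
    (q : ℝ) (hq0 : 0 < q) (hq1 : q < 1)
    (n : ℕ) (hn : 1 ≤ n) (s : ℕ) (hs : s ≤ n) (t : ℂ) (w : Fin n → ℂ)
    (hw : ∀ i j : Fin n, i ≠ j → (q : ℂ) * w i ≠ w j) :
    (∑ I ∈ Finset.powersetCard s (Finset.univ : Finset (Fin n)),
      Bfin q w I * Bfin q w Iᶜ * (∏ j ∈ Iᶜ, (1 - t * w j)) * Gpair q w I Iᶜ)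
    = Bfin q w Finset.univ *
        ∑ k ∈ Finset.range (n - s + 1),
          (-1 : ℂ) ^ k * ((qbinom q (n - k) s : ℝ) : ℂ) * esym w k * t ^ k := by
  exact qtazrp_B_identity_two_aux q hq0 hq1 n s hs t w hw
end
end
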